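/- There is a universal constant C > 0 such that the estimation-error term satisfies T_1 := E[(f_n(x̃) − f_∞(x̃))²] + E[(f_n(x_NN) − f_∞(x_NN))²] ≤ C · d² L² n^{−2/3}. -/

import Mathlib

open MeasureTheory
open scoped RealInnerProductSpace ENNReal

/-- Uniform probability distribution on the closed Euclidean ball of radius `√(d+2)`
centered at the origin in `ℝ^d`. -/
noncomputable def uniformBall (d : ℕ) : Measure (EuclideanSpace ℝ (Fin d)) :=
  (volume (Metric.closedBall (0 : EuclideanSpace ℝ (Fin d)) (Real.sqrt (d + 2))))⁻¹ •
    volume.restrict (Metric.closedBall (0 : EuclideanSpace ℝ (Fin d)) (Real.sqrt (d + 2)))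

/-- The joint distribution of the i.i.d. training samples `x_1, …, x_n` and
the test point `x̃`. -/
noncomputable def jointMeasure (d n : ℕ) :
    Measure ((Fin n → EuclideanSpace ℝ (Fin d)) × EuclideanSpace ℝ (Fin d)) :=
  (Measure.pi fun _ : Fin n => uniformBall d).prod (uniformBall d)

/-- `θn xs` is a minimizer of the empirical risk
`(1/n) ∑ i (⟨x_i, θ⟩ - ⟨x_i, θ⋆⟩)²` over the ball `{θ : ‖θ‖ ≤ L}`. -/
def IsERM (d n : ℕ) (L : ℝ) (θstar : EuclideanSpace ℝ (Fin d))
    (θn : (Fin n → EuclideanSpace ℝ (Fin d)) → EuclideanSpace ℝ (Fin d)) : Prop :=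
  ∀ xs : Fin n → EuclideanSpace ℝ (Fin d),
    ‖θn xs‖ ≤ L ∧
    ∀ θ : EuclideanSpace ℝ (Fin d), ‖θ‖ ≤ L →
      (n : ℝ)⁻¹ * ∑ i, (⟪xs i, θn xs⟫ - ⟪xs i, θstar⟫) ^ 2 ≤
        (n : ℝ)⁻¹ * ∑ i, (⟪xs i, θ⟫ - ⟪xs i, θstar⟫) ^ 2

/-- `xNN (xs, x̃)` is a nearest neighbor of `x̃` among `x_1, …, x_n`
in Euclidean distance. -/
def IsNN (d n : ℕ)
    (xNN : (Fin n → EuclideanSpace ℝ (Fin d)) × EuclideanSpace ℝ (Fin d) →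
      EuclideanSpace ℝ (Fin d)) : Prop :=
  ∀ ω : (Fin n → EuclideanSpace ℝ (Fin d)) × EuclideanSpace ℝ (Fin d),
    ∃ j : Fin n, xNN ω = ω.1 j ∧ ∀ i : Fin n, ‖ω.2 - xNN ω‖ ≤ ‖ω.2 - ω.1 i‖

open Metric

set_option linter.unusedSectionVars false

section Basic
variable (d : ℕ) [NeZero d]

local notation "E" => EuclideanSpace ℝ (Fin d)
noncomputable def rad : ℝ := Real.sqrt (d + 2)
noncomputable def Bd : Set (EuclideanSpace ℝ (Fin d)) := Metric.closedBall (0 : EuclideanSpace ℝ (Fin d)) (rad d)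

lemma rad_pos : 0 < rad d := Real.sqrt_pos.2 (by positivity)

lemma rad_sq : rad d ^ 2 = d + 2 := Real.sq_sqrt (by positivity)

lemma volBd_ne_zero : volume (Bd d) ≠ 0 := (measure_closedBall_pos _ _ (rad_pos d)).ne'

lemma volBd_ne_top : volume (Bd d) ≠ ⊤ := measure_closedBall_lt_top.ne

instance : IsProbabilityMeasure (uniformBall d) := by
  constructor
  rw [uniformBall, Measure.smul_apply, Measure.restrict_apply MeasurableSet.univ,
    Set.univ_inter, smul_eq_mul]
  exact ENNReal.inv_mul_cancel (volBd_ne_zero d) (volBd_ne_top d)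

lemma ae_mem_Bd : ∀ᵐ x ∂(uniformBall d), x ∈ Bd d := by
  have h : (uniformBall d) ((Bd d)ᶜ) = 0 := by
    simp only [uniformBall, Bd, rad, Measure.smul_apply]
    rw [Measure.restrict_apply measurableSet_closedBall.compl, Set.compl_inter_self]
    simp
  exact ae_iff.2 h

lemma norm_le_of_mem_Bd {x : EuclideanSpace ℝ (Fin d)} (hx : x ∈ Bd d) : ‖x‖ ≤ rad d := by
  simpa [Bd, mem_closedBall_zero_iff] using hx

lemma sq_norm_le_of_mem_Bd {x : EuclideanSpace ℝ (Fin d)} (hx : x ∈ Bd d) :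
    ‖x‖ ^ 2 ≤ (d : ℝ) + 2 := by
  have := norm_le_of_mem_Bd d hx
  calc ‖x‖ ^ 2 ≤ rad d ^ 2 := by nlinarith [norm_nonneg x, rad_pos d]
  _ = (d : ℝ) + 2 := rad_sq d

lemma integrable_of_bound {f : EuclideanSpace ℝ (Fin d) → ℝ}
    (hf : AEStronglyMeasurable f (uniformBall d)) {M : ℝ}
    (h : ∀ x ∈ Bd d, |f x| ≤ M) : Integrable f (uniformBall d) := by
  refine Integrable.mono' (integrable_const M) hf ?_
  filter_upwards [ae_mem_Bd d] with x hx
  simpa [Real.norm_eq_abs] using h x hx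

lemma nonempty_fin : Nonempty (Fin d) := Fin.pos_iff_nonempty.mp (Nat.pos_of_ne_zero (NeZero.ne d))

lemma integral_norm_sq_uniformBall : ∫ x, ‖x‖ ^ 2 ∂(uniformBall d) = d := by
  haveI := nonempty_fin d
  haveI : Nontrivial E := inferInstance
  set r := rad d with hr
  have hrpos := rad_pos d
  set f : ℝ → ℝ := (Set.Icc (0:ℝ) r).indicator (fun y => y ^ 2) with hf
  have hdim : Module.finrank ℝ E = d := finrank_euclideanSpace_fin
  have hd1 : 1 ≤ d := Nat.pos_of_ne_zero (NeZero.ne d)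
  have key := MeasureTheory.integral_fun_norm_addHaar (volume : Measure E) f
  -- LHS of key
  have hL : (∫ x : E, f ‖x‖ ∂volume) = ∫ x in Bd d, ‖x‖ ^ 2 ∂volume := by
    rw [Bd, ← MeasureTheory.integral_indicator measurableSet_closedBall]
    congr 1
    funext x
    by_cases hx : x ∈ Bd d
    · have h1 : ‖x‖ ∈ Set.Icc (0:ℝ) r := ⟨norm_nonneg x, norm_le_of_mem_Bd d hx⟩
      rw [hf, Set.indicator_of_mem h1,
        Set.indicator_of_mem (show x ∈ closedBall (0:E) (rad d) from hx)]
    · have h1 : ‖x‖ ∉ Set.Icc (0:ℝ) r := by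
        simp only [Set.mem_Icc, not_and_or]
        right
        simpa [Bd, mem_closedBall_zero_iff] using hx
      rw [hf, Set.indicator_of_notMem h1,
        Set.indicator_of_notMem (show x ∉ closedBall (0:E) (rad d) from hx)]
  -- radial integral
  have hrad : (∫ y in Set.Ioi (0:ℝ), y ^ (Module.finrank ℝ E - 1) • f y ∂volume)
      = r ^ (d + 2) / (d + 2) := by
    have hpt : ∀ y : ℝ, y ^ (Module.finrank ℝ E - 1) • f y
        = (Set.Icc (0:ℝ) r).indicator (fun y => y ^ (d + 1)) y := by
      intro y
      by_cases hy : y ∈ Set.Icc (0:ℝ) r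
      · rw [hf]
        rw [Set.indicator_of_mem hy, Set.indicator_of_mem hy, smul_eq_mul, hdim,
          ← pow_add]
        congr 1
        omega
      · rw [hf, Set.indicator_of_notMem hy, Set.indicator_of_notMem hy, smul_zero]
    simp_rw [hpt]
    rw [MeasureTheory.integral_indicator measurableSet_Icc,
      MeasureTheory.Measure.restrict_restrict measurableSet_Icc]
    have hset : Set.Icc (0:ℝ) r ∩ Set.Ioi 0 = Set.Ioc 0 r := by
      ext y
      simp only [Set.mem_inter_iff, Set.mem_Icc, Set.mem_Ioi, Set.mem_Ioc]
      constructor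
      · rintro ⟨⟨_, h2⟩, h3⟩; exact ⟨h3, h2⟩
      · rintro ⟨h1, h2⟩; exact ⟨⟨le_of_lt h1, h2⟩, h1⟩
    rw [hset, ← intervalIntegral.integral_of_le hrpos.le, integral_pow]
    push_cast
    ring
  set W := (volume (ball (0:E) 1)).toReal with hW
  have hWpos : 0 < W := ENNReal.toReal_pos (measure_ball_pos _ _ one_pos).ne'
    measure_ball_lt_top.ne
  have hVB : (volume (Bd d)).toReal = r ^ d * W := by
    rw [Bd, MeasureTheory.Measure.addHaar_closedBall _ _ hrpos.le, ENNReal.toReal_mul,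
      ENNReal.toReal_ofReal (by positivity), hdim, ← hr]
  have hB : (∫ x in Bd d, ‖x‖ ^ 2 ∂volume) = d * W * (r ^ (d + 2) / (d + 2)) := by
    rw [← hL, key, hrad, hdim]
    simp only [nsmul_eq_mul, smul_eq_mul, Measure.real, hW]
    ring
  have hU : ∫ x, ‖x‖ ^ 2 ∂(uniformBall d) = (volume (Bd d)).toReal⁻¹ *
      ∫ x in Bd d, ‖x‖ ^ 2 ∂volume := by
    rw [uniformBall, MeasureTheory.integral_smul_measure, ENNReal.toReal_inv, smul_eq_mul]
    rfl
  rw [hU, hB, hVB]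
  have hrd : r ^ (d + 2) = r ^ d * r ^ 2 := pow_add r d 2
  have hr2 : r ^ 2 = (d : ℝ) + 2 := rad_sq d
  have h1 : r ^ d ≠ 0 := by positivity
  have h2 : (d : ℝ) + 2 ≠ 0 := by positivity
  rw [hrd, hr2]
  field_simp

lemma map_uniformBall (e : EuclideanSpace ℝ (Fin d) ≃ₗᵢ[ℝ] EuclideanSpace ℝ (Fin d)) :
    (uniformBall d).map e = uniformBall d := by
  have hpre : (e : E → E) ⁻¹' (closedBall (0:E) (rad d)) = closedBall (0:E) (rad d) := by
    ext x
    simp [mem_closedBall_zero_iff, e.norm_map]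
  have hres : (volume.restrict (closedBall (0:E) (rad d))).map e
      = volume.restrict (closedBall (0:E) (rad d)) := by
    conv_lhs => rw [← hpre]
    rw [← MeasureTheory.Measure.restrict_map e.continuous.measurable
      measurableSet_closedBall, e.measurePreserving.map_eq]
  rw [show uniformBall d = (volume (closedBall (0:E) (rad d)))⁻¹ •
      volume.restrict (closedBall (0:E) (rad d)) from rfl,
    MeasureTheory.Measure.map_smul, hres]

lemma integral_comp_uniformBall (e : EuclideanSpace ℝ (Fin d) ≃ₗᵢ[ℝ] EuclideanSpace ℝ (Fin d))
    (g : EuclideanSpace ℝ (Fin d) → ℝ) :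
    ∫ x, g (e x) ∂(uniformBall d) = ∫ x, g x ∂(uniformBall d) := by
  have hmp : MeasurePreserving e (uniformBall d) (uniformBall d) :=
    ⟨e.continuous.measurable, map_uniformBall d e⟩
  exact hmp.integral_comp e.toHomeomorph.measurableEmbedding g

lemma integrable_inner_sq (u : EuclideanSpace ℝ (Fin d)) :
    Integrable (fun x => ⟪x, u⟫ ^ 2) (uniformBall d) := by
  apply integrable_of_bound d
    (((continuous_id.inner continuous_const).pow 2).aestronglyMeasurable)
    (M := ((d:ℝ) + 2) * ‖u‖ ^ 2)
  intro x hx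
  simp only [id_eq, Pi.pow_apply]
  have h1 : |⟪x, u⟫| ≤ ‖x‖ * ‖u‖ := abs_real_inner_le_norm x u
  have h2 := sq_norm_le_of_mem_Bd d hx
  have h3 : ⟪x, u⟫ ^ 2 ≤ ‖x‖ ^ 2 * ‖u‖ ^ 2 := by
    calc ⟪x, u⟫ ^ 2 = |⟪x, u⟫| ^ 2 := (sq_abs _).symm
    _ ≤ (‖x‖ * ‖u‖) ^ 2 := pow_le_pow_left₀ (abs_nonneg _) h1 2
    _ = ‖x‖ ^ 2 * ‖u‖ ^ 2 := mul_pow _ _ 2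
  rw [abs_of_nonneg (sq_nonneg _)]
  nlinarith [sq_nonneg ‖u‖]

lemma integral_inner_sq_unit {u : EuclideanSpace ℝ (Fin d)} (hu : ‖u‖ = 1) :
    ∫ x, ⟪x, u⟫ ^ 2 ∂(uniformBall d) = 1 := by
  haveI := nonempty_fin d
  have hsym : ∀ u w : EuclideanSpace ℝ (Fin d), ‖u‖ = ‖w‖ →
      ∫ x, ⟪x, u⟫ ^ 2 ∂(uniformBall d) = ∫ x, ⟪x, w⟫ ^ 2 ∂(uniformBall d) := by
    intro u w huw
    let e := Submodule.reflection (ℝ ∙ (u - w))ᗮ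
    have he : e u = w := Submodule.reflection_sub huw
    calc ∫ x, ⟪x, u⟫ ^ 2 ∂(uniformBall d)
        = ∫ x, ⟪e x, e u⟫ ^ 2 ∂(uniformBall d) := by
          simp_rw [e.inner_map_map]
      _ = ∫ x, ⟪x, e u⟫ ^ 2 ∂(uniformBall d) :=
          integral_comp_uniformBall d e (fun x => ⟪x, e u⟫ ^ 2)
      _ = ∫ x, ⟪x, w⟫ ^ 2 ∂(uniformBall d) := by rw [he]
  obtain ⟨k0⟩ := nonempty_fin d
  set c := ∫ x, ⟪x, (EuclideanSpace.single k0 (1:ℝ))⟫ ^ 2 ∂(uniformBall d) with hc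
  have hunit : ∀ k : Fin d, ‖(EuclideanSpace.single k (1:ℝ))‖ = 1 := by
    intro k; rw [EuclideanSpace.norm_single]; norm_num
  have hsum : (d : ℝ) * c = d := by
    have h1 : ∑ k : Fin d, ∫ x, ⟪x, (EuclideanSpace.single k (1:ℝ))⟫ ^ 2 ∂(uniformBall d)
        = ∫ x, ‖x‖ ^ 2 ∂(uniformBall d) := by
      rw [← integral_finset_sum _ (fun k _ => integrable_inner_sq d _)]
      congr 1
      funext x
      have : ∀ k : Fin d, ⟪x, (EuclideanSpace.single k (1:ℝ))⟫ = x k := by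
        intro k
        rw [EuclideanSpace.inner_single_right]
        simp
      simp_rw [this]
      rw [← real_inner_self_eq_norm_sq]
      simp [PiLp.inner_apply, RCLike.inner_apply, pow_two]
      rw [← pow_two, EuclideanSpace.norm_sq_eq]
      simp [Real.norm_eq_abs, pow_two]
    have h2 : ∀ k : Fin d, ∫ x, ⟪x, (EuclideanSpace.single k (1:ℝ))⟫ ^ 2 ∂(uniformBall d) = c :=
      fun k => hsym _ _ (by rw [hunit k, hunit k0])
    simp_rw [h2] at h1
    rw [Finset.sum_const, integral_norm_sq_uniformBall d] at h1
    simpa using h1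
  have hd : (d : ℝ) ≠ 0 := Nat.cast_ne_zero.2 (NeZero.ne d)
  have hcu : ∫ x, ⟪x, u⟫ ^ 2 ∂(uniformBall d) = c := hsym _ _ (by rw [hu, hunit k0])
  rw [hcu]
  field_simp at hsum
  tauto

lemma integral_inner_sq (u : EuclideanSpace ℝ (Fin d)) :
    ∫ x, ⟪x, u⟫ ^ 2 ∂(uniformBall d) = ‖u‖ ^ 2 := by
  rcases eq_or_ne u 0 with rfl | hu
  · simp
  · have hn : ‖u‖ ≠ 0 := norm_ne_zero_iff.2 hu
    set w : EuclideanSpace ℝ (Fin d) := ‖u‖⁻¹ • u with hw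
    have hwu : ‖w‖ = 1 := by
      rw [hw, norm_smul, norm_inv, norm_norm, inv_mul_cancel₀ hn]
    have hud : u = ‖u‖ • w := by rw [hw, smul_smul, mul_inv_cancel₀ hn, one_smul]
    have hxw : ∀ x : EuclideanSpace ℝ (Fin d), ⟪x, u⟫ = ‖u‖ * ⟪x, w⟫ := by
      intro x
      nth_rewrite 1 [hud]
      rw [real_inner_smul_right]
    calc ∫ x, ⟪x, u⟫ ^ 2 ∂(uniformBall d)
        = ∫ x, ‖u‖ ^ 2 * ⟪x, w⟫ ^ 2 ∂(uniformBall d) := by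
          congr 1; funext x
          rw [hxw x]; ring
      _ = ‖u‖ ^ 2 * ∫ x, ⟪x, w⟫ ^ 2 ∂(uniformBall d) := integral_const_mul _ _
      _ = ‖u‖ ^ 2 := by rw [integral_inner_sq_unit d hwu, mul_one]

lemma integral_inner_mul (u w : EuclideanSpace ℝ (Fin d)) :
    ∫ x, ⟪x, u⟫ * ⟪x, w⟫ ∂(uniformBall d) = ⟪u, w⟫ := by
  have hpt : (fun x : EuclideanSpace ℝ (Fin d) => ⟪x, u⟫ * ⟪x, w⟫)
      = fun x => (⟪x, u + w⟫ ^ 2 - ⟪x, u⟫ ^ 2 - ⟪x, w⟫ ^ 2) / 2 := by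
    funext x
    rw [inner_add_right]
    ring
  rw [hpt, integral_div]
  have h1 : Integrable (fun x : EuclideanSpace ℝ (Fin d) => ⟪x, u + w⟫ ^ 2 - ⟪x, u⟫ ^ 2)
      (uniformBall d) := (integrable_inner_sq d (u + w)).sub (integrable_inner_sq d u)
  rw [integral_sub h1 (integrable_inner_sq d w),
    integral_sub (integrable_inner_sq d (u + w)) (integrable_inner_sq d u),
    integral_inner_sq d, integral_inner_sq d, integral_inner_sq d, norm_add_sq_real]
  ring

/-- the centered vector `Z`. -/
noncomputable def Zvec (θ : EuclideanSpace ℝ (Fin d)) (x : EuclideanSpace ℝ (Fin d)) :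
    EuclideanSpace ℝ (Fin d) := ⟪x, θ⟫ • x - θ

lemma Zvec_continuous (θ : EuclideanSpace ℝ (Fin d)) : Continuous (Zvec d θ) := by
  apply Continuous.sub _ continuous_const
  exact ((continuous_id.inner continuous_const :
    Continuous fun x : EuclideanSpace ℝ (Fin d) => ⟪x, θ⟫)).smul continuous_id

lemma Zvec_norm_le {θ x : EuclideanSpace ℝ (Fin d)} (hθ : ‖θ‖ = 1) (hx : x ∈ Bd d) :
    ‖Zvec d θ x‖ ≤ (d:ℝ) + 3 := by
  have h1 : |⟪x, θ⟫| ≤ ‖x‖ * ‖θ‖ := abs_real_inner_le_norm x θ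
  have h2 := sq_norm_le_of_mem_Bd d hx
  have h0 : (0:ℝ) ≤ ‖x‖ := norm_nonneg x
  calc ‖Zvec d θ x‖ ≤ ‖⟪x, θ⟫ • x‖ + ‖θ‖ := norm_sub_le _ _
  _ = |⟪x, θ⟫| * ‖x‖ + 1 := by rw [norm_smul, hθ, Real.norm_eq_abs]
  _ ≤ ‖x‖ * ‖x‖ + 1 := by nlinarith [abs_nonneg ⟪x, θ⟫]
  _ ≤ (d:ℝ) + 3 := by nlinarith

lemma Zvec_integrable {θ : EuclideanSpace ℝ (Fin d)} (hθ : ‖θ‖ = 1) :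
    Integrable (Zvec d θ) (uniformBall d) := by
  refine Integrable.mono' (integrable_const ((d:ℝ) + 3))
    (Zvec_continuous d θ).aestronglyMeasurable ?_
  filter_upwards [ae_mem_Bd d] with x hx
  exact Zvec_norm_le d hθ hx

lemma Zvec_integral_eq_zero {θ : EuclideanSpace ℝ (Fin d)} (hθ : ‖θ‖ = 1) :
    ∫ x, Zvec d θ x ∂(uniformBall d) = 0 := by
  set I := ∫ x, Zvec d θ x ∂(uniformBall d) with hI
  have key : ⟪I, I⟫ = 0 := by
    rw [hI, ← integral_inner (Zvec_integrable d hθ) I]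
    have hpt : ∀ x : EuclideanSpace ℝ (Fin d),
        ⟪I, Zvec d θ x⟫ = ⟪x, θ⟫ * ⟪x, I⟫ - ⟪I, θ⟫ := by
      intro x
      rw [Zvec, inner_sub_right, real_inner_smul_right]
      rw [real_inner_comm I x]
    simp_rw [hpt]
    have hint1 : Integrable (fun x : EuclideanSpace ℝ (Fin d) => ⟪x, θ⟫ * ⟪x, I⟫)
        (uniformBall d) := by
      have := integral_inner_mul d θ I  -- just for shape
      apply integrable_of_bound d
        (((continuous_id.inner continuous_const).mul
          (continuous_id.inner continuous_const)).aestronglyMeasurable)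
        (M := (((d:ℝ) + 2) * ‖θ‖) * (((d:ℝ)+2) * ‖I‖))
      intro x hx
      simp only [id_eq, Pi.mul_apply]
      have h2 := sq_norm_le_of_mem_Bd d hx
      have hd0 : (0:ℝ) ≤ (d:ℝ) + 2 := by positivity
      have hx2 : ‖x‖ ≤ (d:ℝ) + 2 := by nlinarith [norm_nonneg x]
      rw [abs_mul]
      have b1 : |⟪x, θ⟫| ≤ ((d:ℝ) + 2) * ‖θ‖ := by
        calc |⟪x, θ⟫| ≤ ‖x‖ * ‖θ‖ := abs_real_inner_le_norm x θ
        _ ≤ ((d:ℝ) + 2) * ‖θ‖ := by nlinarith [norm_nonneg θ]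
      have b2 : |⟪x, I⟫| ≤ ((d:ℝ) + 2) * ‖I‖ := by
        calc |⟪x, I⟫| ≤ ‖x‖ * ‖I‖ := abs_real_inner_le_norm x I
        _ ≤ ((d:ℝ) + 2) * ‖I‖ := by nlinarith [norm_nonneg I]
      exact mul_le_mul b1 b2 (abs_nonneg _) (by positivity)
    rw [integral_sub hint1 (integrable_const _), integral_inner_mul d θ I,
      integral_const, probReal_univ]
    simp only [ENNReal.toReal_one, one_smul]
    rw [real_inner_comm I θ]
    exact sub_self _
  exact inner_self_eq_zero.mp key

lemma Zvec_integral_norm_sq_le {θ : EuclideanSpace ℝ (Fin d)} (hθ : ‖θ‖ = 1) :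
    ∫ x, ‖Zvec d θ x‖ ^ 2 ∂(uniformBall d) ≤ 8 * d := by
  have hub : ∫ x, (2 * ((d:ℝ) + 2) * ⟪x, θ⟫ ^ 2 + 2) ∂(uniformBall d) = 2 * ((d:ℝ) + 2) + 2 := by
    rw [integral_add (((integrable_inner_sq d θ).const_mul _)) (integrable_const _),
      integral_const_mul, integral_inner_sq d, hθ, integral_const]
    simp
  have hmono : ∫ x, ‖Zvec d θ x‖ ^ 2 ∂(uniformBall d)
      ≤ ∫ x, (2 * ((d:ℝ) + 2) * ⟪x, θ⟫ ^ 2 + 2) ∂(uniformBall d) := by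
    apply integral_mono_ae
    · apply integrable_of_bound d ((((Zvec_continuous d θ).norm).pow 2).aestronglyMeasurable)
        (M := ((d:ℝ) + 3) ^ 2)
      intro x hx
      have := Zvec_norm_le d hθ hx
      rw [abs_of_nonneg (sq_nonneg _)]
      exact (show ‖Zvec d θ x‖ ^ 2 ≤ ((d:ℝ) + 3) ^ 2 by nlinarith [norm_nonneg (Zvec d θ x)])
    · exact ((integrable_inner_sq d θ).const_mul _).add (integrable_const _)
    filter_upwards [ae_mem_Bd d] with x hx
    have h1 : |⟪x, θ⟫| ≤ ‖x‖ * ‖θ‖ := abs_real_inner_le_norm x θ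
    have h2 := sq_norm_le_of_mem_Bd d hx
    have h3 : ‖Zvec d θ x‖ ≤ |⟪x, θ⟫| * ‖x‖ + 1 := by
      calc ‖Zvec d θ x‖ ≤ ‖⟪x, θ⟫ • x‖ + ‖θ‖ := norm_sub_le _ _
      _ = |⟪x, θ⟫| * ‖x‖ + 1 := by rw [norm_smul, hθ, Real.norm_eq_abs]
    have h4 : ‖Zvec d θ x‖ ^ 2 ≤ (|⟪x, θ⟫| * ‖x‖ + 1) ^ 2 :=
      pow_le_pow_left₀ (norm_nonneg _) h3 2
    have h5 : (|⟪x, θ⟫| * ‖x‖ + 1) ^ 2 ≤ 2 * (⟪x, θ⟫ ^ 2 * ‖x‖ ^ 2) + 2 := by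
      nlinarith [sq_abs ⟪x, θ⟫, abs_nonneg ⟪x, θ⟫, norm_nonneg x,
        sq_nonneg (|⟪x, θ⟫| * ‖x‖ - 1)]
    have h6 : ⟪x, θ⟫ ^ 2 * ‖x‖ ^ 2 ≤ ((d:ℝ) + 2) * ⟪x, θ⟫ ^ 2 := by
      nlinarith [sq_nonneg ⟪x, θ⟫]
    nlinarith
  have hd1 : 1 ≤ (d:ℝ) := by
    have := Nat.one_le_iff_ne_zero.2 (NeZero.ne d)
    exact_mod_cast this
  nlinarith [hub, hmono]

lemma uniformBall_compl_Bd : uniformBall d ((Bd d)ᶜ) = 0 := ae_iff.1 (ae_mem_Bd d)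

end Basic

section Pi

variable (d n : ℕ) [NeZero d]

lemma measurePreserving_eval (i : Fin n) :
    MeasurePreserving (fun xs : Fin n → EuclideanSpace ℝ (Fin d) => xs i)
      (Measure.pi (fun _ : Fin n => uniformBall d)) (uniformBall d) := by
  constructor
  · exact measurable_pi_apply i
  · ext s hs
    rw [Measure.map_apply (measurable_pi_apply i) hs]
    have hset : (fun xs : Fin n → EuclideanSpace ℝ (Fin d) => xs i) ⁻¹' s
        = Set.pi Set.univ (fun k => if k = i then s
            else (Set.univ : Set (EuclideanSpace ℝ (Fin d)))) := by
      ext xs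
      simp only [Set.mem_preimage, Set.mem_pi, Set.mem_univ, true_implies]
      constructor
      · intro h k
        by_cases hk : k = i
        · subst hk; simpa using h
        · simp [hk]
      · intro h
        have := h i
        simpa using this
    rw [hset, Measure.pi_pi]
    have : ∀ k : Fin n, (uniformBall d) (if k = i then s
        else (Set.univ : Set (EuclideanSpace ℝ (Fin d))))
        = if k = i then (uniformBall d) s else 1 := by
      intro k; split_ifs <;> simp
    simp_rw [this]
    rw [Finset.prod_ite_eq' Finset.univ i (fun _ => (uniformBall d) s)]
    simp

lemma measurePreserving_pair {i j : Fin n} (hij : i ≠ j) :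
    MeasurePreserving (fun xs : Fin n → EuclideanSpace ℝ (Fin d) => (xs i, xs j))
      (Measure.pi (fun _ : Fin n => uniformBall d))
      ((uniformBall d).prod (uniformBall d)) := by
  have hm : Measurable (fun xs : Fin n → EuclideanSpace ℝ (Fin d) => (xs i, xs j)) :=
    (measurable_pi_apply i).prodMk (measurable_pi_apply j)
  constructor
  · exact hm
  · symm
    apply MeasureTheory.Measure.prod_eq
    intro s t hs ht
    rw [Measure.map_apply hm (hs.prod ht)]
    have hset : (fun xs : Fin n → EuclideanSpace ℝ (Fin d) => (xs i, xs j)) ⁻¹' (s ×ˢ t)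
        = Set.pi Set.univ (fun k => if k = i then s else if k = j then t
            else (Set.univ : Set (EuclideanSpace ℝ (Fin d)))) := by
      ext xs
      simp only [Set.mem_preimage, Set.mem_prod, Set.mem_pi, Set.mem_univ, true_implies]
      constructor
      · intro h k
        by_cases hk : k = i
        · subst hk; simpa using h.1
        · by_cases hk2 : k = j
          · subst hk2; simp [hk, h.2]
          · simp [hk, hk2]
      · intro h
        refine ⟨by simpa using h i, ?_⟩
        have := h j
        simpa [Ne.symm hij] using this
    rw [hset, Measure.pi_pi]
    have hfac : ∀ k : Fin n, (uniformBall d) (if k = i then s else if k = j then t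
          else (Set.univ : Set (EuclideanSpace ℝ (Fin d))))
        = (if k = i then (uniformBall d) s else 1) * (if k = j then (uniformBall d) t else 1) := by
      intro k
      by_cases hk : k = i
      · subst hk; rw [if_pos rfl, if_pos rfl, if_neg hij]; simp
      · by_cases hk2 : k = j
        · subst hk2; simp [hk]
        · simp [hk, hk2]
    simp_rw [hfac]
    rw [Finset.prod_mul_distrib,
      Finset.prod_ite_eq' Finset.univ i (fun _ => (uniformBall d) s),
      Finset.prod_ite_eq' Finset.univ j (fun _ => (uniformBall d) t)]
    simp

lemma ae_pi_mem_Bd : ∀ᵐ xs ∂(Measure.pi (fun _ : Fin n => uniformBall d)),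
    ∀ i, xs i ∈ Bd d := by
  rw [ae_all_iff]
  intro i
  rw [ae_iff]
  have : {xs : Fin n → EuclideanSpace ℝ (Fin d) | ¬ xs i ∈ Bd d}
      = (fun xs : Fin n → EuclideanSpace ℝ (Fin d) => xs i) ⁻¹' ((Bd d)ᶜ) := rfl
  rw [this, (measurePreserving_eval d n i).measure_preimage
    ((show MeasurableSet ((Bd d)ᶜ) from measurableSet_closedBall.compl).nullMeasurableSet)]
  exact uniformBall_compl_Bd d

variable {θ : EuclideanSpace ℝ (Fin d)}

lemma integrable_inner_Z_pair (hθ : ‖θ‖ = 1) (i j : Fin n) :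
    Integrable (fun xs : Fin n → EuclideanSpace ℝ (Fin d) =>
      ⟪Zvec d θ (xs i), Zvec d θ (xs j)⟫)
      (Measure.pi (fun _ : Fin n => uniformBall d)) := by
  have hc : Continuous (fun xs : Fin n → EuclideanSpace ℝ (Fin d) =>
      ⟪Zvec d θ (xs i), Zvec d θ (xs j)⟫) :=
    ((Zvec_continuous d θ).comp (continuous_apply i)).inner
      ((Zvec_continuous d θ).comp (continuous_apply j))
  refine Integrable.mono' (integrable_const (((d:ℝ) + 3) * ((d:ℝ) + 3)))
    hc.aestronglyMeasurable ?_
  filter_upwards [ae_pi_mem_Bd d n] with xs hxs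
  have h1 := Zvec_norm_le d hθ (hxs i)
  have h2 := Zvec_norm_le d hθ (hxs j)
  rw [Real.norm_eq_abs]
  calc |⟪Zvec d θ (xs i), Zvec d θ (xs j)⟫|
      ≤ ‖Zvec d θ (xs i)‖ * ‖Zvec d θ (xs j)‖ := abs_real_inner_le_norm _ _
  _ ≤ ((d:ℝ) + 3) * ((d:ℝ) + 3) :=
      mul_le_mul h1 h2 (norm_nonneg _) (by positivity)

lemma integral_inner_Z_cross (hθ : ‖θ‖ = 1) {i j : Fin n} (hij : i ≠ j) :
    ∫ xs, ⟪Zvec d θ (xs i), Zvec d θ (xs j)⟫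
      ∂(Measure.pi (fun _ : Fin n => uniformBall d)) = 0 := by
  set μ := uniformBall d
  have hF : Continuous (fun p : EuclideanSpace ℝ (Fin d) × EuclideanSpace ℝ (Fin d) =>
      ⟪Zvec d θ p.1, Zvec d θ p.2⟫) :=
    ((Zvec_continuous d θ).comp continuous_fst).inner ((Zvec_continuous d θ).comp continuous_snd)
  have hmp := measurePreserving_pair d n hij
  have hmap := MeasureTheory.integral_map
    (μ := Measure.pi (fun _ : Fin n => uniformBall d))
    (f := fun p : EuclideanSpace ℝ (Fin d) × EuclideanSpace ℝ (Fin d) =>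
      ⟪Zvec d θ p.1, Zvec d θ p.2⟫)
    hmp.measurable.aemeasurable hF.aestronglyMeasurable
  rw [hmp.map_eq] at hmap
  rw [← hmap]
  -- now over the product measure
  have haeprod : ∀ᵐ p : EuclideanSpace ℝ (Fin d) × EuclideanSpace ℝ (Fin d) ∂(μ.prod μ),
      p.1 ∈ Bd d ∧ p.2 ∈ Bd d := by
    have hA : (μ.prod μ) {p : EuclideanSpace ℝ (Fin d) × EuclideanSpace ℝ (Fin d)
        | ¬ p.1 ∈ Bd d} = 0 := by
      have hset : {p : EuclideanSpace ℝ (Fin d) × EuclideanSpace ℝ (Fin d) | ¬ p.1 ∈ Bd d}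
          = ((Bd d)ᶜ) ×ˢ (Set.univ : Set (EuclideanSpace ℝ (Fin d))) := by
        ext p; simp [Set.mem_prod]
      rw [hset, Measure.prod_prod, uniformBall_compl_Bd d, zero_mul]
    have hB : (μ.prod μ) {p : EuclideanSpace ℝ (Fin d) × EuclideanSpace ℝ (Fin d)
        | ¬ p.2 ∈ Bd d} = 0 := by
      have hset : {p : EuclideanSpace ℝ (Fin d) × EuclideanSpace ℝ (Fin d) | ¬ p.2 ∈ Bd d}
          = (Set.univ : Set (EuclideanSpace ℝ (Fin d))) ×ˢ ((Bd d)ᶜ) := by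
        ext p; simp [Set.mem_prod]
      rw [hset, Measure.prod_prod, uniformBall_compl_Bd d, mul_zero]
    exact (ae_iff.2 hA).and (ae_iff.2 hB)
  have hint : Integrable (fun p : EuclideanSpace ℝ (Fin d) × EuclideanSpace ℝ (Fin d) =>
      ⟪Zvec d θ p.1, Zvec d θ p.2⟫) (μ.prod μ) := by
    refine Integrable.mono' (integrable_const (((d:ℝ) + 3) * ((d:ℝ) + 3)))
      hF.aestronglyMeasurable ?_
    filter_upwards [haeprod] with p hp
    have h1 := Zvec_norm_le d hθ hp.1
    have h2 := Zvec_norm_le d hθ hp.2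
    rw [Real.norm_eq_abs]
    calc |⟪Zvec d θ p.1, Zvec d θ p.2⟫| ≤ ‖Zvec d θ p.1‖ * ‖Zvec d θ p.2‖ :=
        abs_real_inner_le_norm _ _
    _ ≤ ((d:ℝ) + 3) * ((d:ℝ) + 3) := mul_le_mul h1 h2 (norm_nonneg _) (by positivity)
  rw [MeasureTheory.integral_prod _ hint]
  have hz : ∀ x : EuclideanSpace ℝ (Fin d),
      ∫ y, ⟪Zvec d θ x, Zvec d θ y⟫ ∂μ = 0 := by
    intro x
    rw [integral_inner (Zvec_integrable d hθ) (Zvec d θ x), Zvec_integral_eq_zero d hθ,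
      inner_zero_right]
  simp_rw [hz]
  exact integral_zero _ _

lemma integral_norm_Z_diag (hθ : ‖θ‖ = 1) (i : Fin n) :
    ∫ xs, ‖Zvec d θ (xs i)‖ ^ 2 ∂(Measure.pi (fun _ : Fin n => uniformBall d))
      = ∫ x, ‖Zvec d θ x‖ ^ 2 ∂(uniformBall d) := by
  have hF : Continuous (fun x : EuclideanSpace ℝ (Fin d) => ‖Zvec d θ x‖ ^ 2) :=
    ((Zvec_continuous d θ).norm).pow 2
  have hmp := measurePreserving_eval d n i
  have hmap := MeasureTheory.integral_map
    (μ := Measure.pi (fun _ : Fin n => uniformBall d))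
    (f := fun x : EuclideanSpace ℝ (Fin d) => ‖Zvec d θ x‖ ^ 2)
    hmp.measurable.aemeasurable hF.aestronglyMeasurable
  rw [hmp.map_eq] at hmap
  rw [← hmap]

end Pi

lemma variance_bound (d n : ℕ) [NeZero d] {θ : EuclideanSpace ℝ (Fin d)} (hn : 1 ≤ n)
    (hθ : ‖θ‖ = 1) :
    ∫ xs, ‖(n:ℝ)⁻¹ • (∑ i, ⟪xs i, θ⟫ • xs i) - θ‖ ^ 2
      ∂(Measure.pi (fun _ : Fin n => uniformBall d)) ≤ 8 * d / n := by
  have hnpos : (0:ℝ) < n := by exact_mod_cast hn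
  have hne : (n:ℝ) ≠ 0 := ne_of_gt hnpos
  have hb : ∀ xs : Fin n → EuclideanSpace ℝ (Fin d),
      (n:ℝ)⁻¹ • (∑ i, ⟪xs i, θ⟫ • xs i) - θ = (n:ℝ)⁻¹ • ∑ i, Zvec d θ (xs i) := by
    intro xs
    have h1 : ∑ i, Zvec d θ (xs i) = (∑ i, ⟪xs i, θ⟫ • xs i) - (n:ℝ) • θ := by
      simp only [Zvec]
      rw [Finset.sum_sub_distrib, Finset.sum_const, Finset.card_univ, Fintype.card_fin,
        ← Nat.cast_smul_eq_nsmul ℝ]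
    rw [h1, smul_sub, smul_smul, inv_mul_cancel₀ hne, one_smul]
  have hpt : ∀ xs : Fin n → EuclideanSpace ℝ (Fin d),
      ‖(n:ℝ)⁻¹ • (∑ i, ⟪xs i, θ⟫ • xs i) - θ‖ ^ 2
        = ((n:ℝ)⁻¹)^2 * ∑ i, ∑ j, ⟪Zvec d θ (xs i), Zvec d θ (xs j)⟫ := by
    intro xs
    rw [hb xs, norm_smul, mul_pow, Real.norm_eq_abs, abs_of_nonneg (by positivity),
      ← real_inner_self_eq_norm_sq]
    congr 1
    rw [sum_inner]
    exact Finset.sum_congr rfl (fun i _ => by rw [inner_sum])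
  calc ∫ xs, ‖(n:ℝ)⁻¹ • (∑ i, ⟪xs i, θ⟫ • xs i) - θ‖ ^ 2
        ∂(Measure.pi (fun _ : Fin n => uniformBall d))
      = ∫ xs, ((n:ℝ)⁻¹)^2 * ∑ i, ∑ j, ⟪Zvec d θ (xs i), Zvec d θ (xs j)⟫
        ∂(Measure.pi (fun _ : Fin n => uniformBall d)) := by
        congr 1; funext xs; exact hpt xs
    _ = ((n:ℝ)⁻¹)^2 * ∫ xs, ∑ i, ∑ j, ⟪Zvec d θ (xs i), Zvec d θ (xs j)⟫
        ∂(Measure.pi (fun _ : Fin n => uniformBall d)) := integral_const_mul _ _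
    _ ≤ 8 * d / n := ?_
  have hsum : ∫ xs, ∑ i, ∑ j, ⟪Zvec d θ (xs i), Zvec d θ (xs j)⟫
      ∂(Measure.pi (fun _ : Fin n => uniformBall d))
      = ∑ i, ∑ j, ∫ xs, ⟪Zvec d θ (xs i), Zvec d θ (xs j)⟫
        ∂(Measure.pi (fun _ : Fin n => uniformBall d)) := by
    rw [integral_finset_sum _ (fun i _ =>
      integrable_finset_sum _ (fun j _ => integrable_inner_Z_pair d n hθ i j))]
    exact Finset.sum_congr rfl (fun i _ =>
      integral_finset_sum _ (fun j _ => integrable_inner_Z_pair d n hθ i j))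
  have hval : ∀ i j : Fin n, ∫ xs, ⟪Zvec d θ (xs i), Zvec d θ (xs j)⟫
      ∂(Measure.pi (fun _ : Fin n => uniformBall d))
      = if i = j then ∫ x, ‖Zvec d θ x‖^2 ∂(uniformBall d) else 0 := by
    intro i j
    by_cases h : i = j
    · subst h
      rw [if_pos rfl, ← integral_norm_Z_diag d n hθ i]
      congr 1; funext xs; rw [real_inner_self_eq_norm_sq]
    · rw [if_neg h]; exact integral_inner_Z_cross d n hθ h
  set c := ∫ x, ‖Zvec d θ x‖^2 ∂(uniformBall d) with hcdef
  have hc8 : c ≤ 8*d := Zvec_integral_norm_sq_le d hθ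
  have hc0 : 0 ≤ c := integral_nonneg (fun x => sq_nonneg _)
  rw [hsum]
  have hsum2 : ∑ i, ∑ j, (∫ xs, ⟪Zvec d θ (xs i), Zvec d θ (xs j)⟫
      ∂(Measure.pi (fun _ : Fin n => uniformBall d))) = (n : ℝ) * c := by
    have : ∀ i : Fin n, ∑ j, (∫ xs, ⟪Zvec d θ (xs i), Zvec d θ (xs j)⟫
        ∂(Measure.pi (fun _ : Fin n => uniformBall d))) = c := by
      intro i
      simp_rw [hval i]
      rw [Finset.sum_ite_eq Finset.univ i (fun _ => c)]
      simp
    simp_rw [this]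
    rw [Finset.sum_const, Finset.card_univ, Fintype.card_fin, nsmul_eq_mul]
  rw [hsum2]
  have heq : ((n:ℝ)⁻¹)^2 * ((n:ℝ) * c) = c / n := by
    field_simp
  rw [heq]
  exact (div_le_div_iff_of_pos_right hnpos).2 hc8

lemma erm_bound (d n : ℕ) (hn : 1 ≤ n) {θstar : EuclideanSpace ℝ (Fin d)} {L : ℝ}
    (hθ : ‖θstar‖ = 1) (hL0 : 0 < L) (hL1 : L < 1)
    (xs : Fin n → EuclideanSpace ℝ (Fin d)) (T : EuclideanSpace ℝ (Fin d))
    (hnorm : ‖T‖ ≤ L)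
    (hopt : (n : ℝ)⁻¹ * ∑ i, (⟪xs i, T⟫ - ⟪xs i, θstar⟫) ^ 2 ≤
        (n : ℝ)⁻¹ * ∑ i, (⟪xs i, L • θstar⟫ - ⟪xs i, θstar⟫) ^ 2) :
    ‖T - L • θstar‖ ^ 2 ≤ 4 * L ^ 2 * ‖(n:ℝ)⁻¹ • (∑ i, ⟪xs i, θstar⟫ • xs i) - θstar‖ ^ 2 := by
  set v := T - L • θstar with hv
  set b := (n:ℝ)⁻¹ • (∑ i, ⟪xs i, θstar⟫ • xs i) with hbdef
  have hnpos : (0:ℝ) < n := by exact_mod_cast hn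
  have hnr : (0:ℝ) < (n:ℝ)⁻¹ := inv_pos.2 hnpos
  have hsum' : ∑ i, (⟪xs i, T⟫ - ⟪xs i, θstar⟫)^2
      ≤ ∑ i, (⟪xs i, L•θstar⟫ - ⟪xs i, θstar⟫)^2 := (mul_le_mul_iff_right₀ hnr).mp hopt
  have hTv : ∀ i, ⟪xs i, T⟫ = ⟪xs i, v⟫ + L * ⟪xs i, θstar⟫ := by
    intro i
    have hT : T = v + L • θstar := by rw [hv]; abel
    rw [hT, inner_add_right, real_inner_smul_right]
  have hsum2 : ∑ i, (⟪xs i, v⟫^2 + 2*(L-1)*(⟪xs i, v⟫*⟪xs i, θstar⟫)) ≤ 0 := by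
    have h1 : ∀ i : Fin n, (⟪xs i, T⟫ - ⟪xs i, θstar⟫)^2
        = (⟪xs i, L•θstar⟫ - ⟪xs i, θstar⟫)^2
          + (⟪xs i, v⟫^2 + 2*(L-1)*(⟪xs i, v⟫*⟪xs i, θstar⟫)) := by
      intro i
      rw [hTv i, real_inner_smul_right]
      ring
    have h2 := hsum'
    rw [Finset.sum_congr rfl (fun i _ => h1 i), Finset.sum_add_distrib] at h2
    linarith
  have hSa : 0 ≤ ∑ i, ⟪xs i, v⟫^2 := Finset.sum_nonneg (fun i _ => sq_nonneg _)
  have hSac : 0 ≤ ∑ i, ⟪xs i, v⟫ * ⟪xs i, θstar⟫ := by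
    rw [Finset.sum_add_distrib, ← Finset.mul_sum] at hsum2
    nlinarith [hsum2, hSa, hL1]
  have hvb : 0 ≤ ⟪v, b⟫ := by
    have h2 : ⟪v, b⟫ = (n:ℝ)⁻¹ * ∑ i, ⟪xs i, v⟫ * ⟪xs i, θstar⟫ := by
      rw [hbdef, real_inner_smul_right, inner_sum]
      congr 1
      refine Finset.sum_congr rfl (fun i _ => ?_)
      rw [real_inner_smul_right, real_inner_comm v (xs i)]
      ring
    rw [h2]
    exact mul_nonneg hnr.le hSac
  have hvθ : 2*L*⟪v, θstar⟫ + ‖v‖^2 ≤ 0 := by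
    have hT2 : ‖T‖^2 ≤ L^2 := by nlinarith [norm_nonneg T]
    have hexp : ‖T‖^2 = L^2 + 2*L*⟪v, θstar⟫ + ‖v‖^2 := by
      have hTeq : T = L • θstar + v := by rw [hv]; abel
      rw [hTeq, norm_add_sq_real, norm_smul, Real.norm_eq_abs, abs_of_pos hL0, hθ,
        real_inner_smul_left, real_inner_comm θstar v]
      ring
    linarith
  have hCS : ⟪v, b - θstar⟫ ≤ ‖v‖ * ‖b - θstar‖ := real_inner_le_norm v (b - θstar)
  have hvb' : 0 ≤ ⟪v, b - θstar⟫ + ⟪v, θstar⟫ := by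
    rw [inner_sub_right]
    simpa using hvb
  have h5 : -⟪v, θstar⟫ ≤ ‖v‖ * ‖b - θstar‖ := by linarith
  have h6 : -(2*L*⟪v, θstar⟫) ≤ 2*L*(‖v‖ * ‖b - θstar‖) := by
    have := mul_le_mul_of_nonneg_left h5 (by positivity : (0:ℝ) ≤ 2*L)
    linarith
  have hfinal : ‖v‖^2 ≤ 2*L*(‖v‖ * ‖b - θstar‖) := by linarith
  nlinarith [hfinal, sq_nonneg (‖v‖ - 2*L*‖b - θstar‖), norm_nonneg v, hL0,
    norm_nonneg (b - θstar)]

/-- **Estimation-error bound:** there is a universal constant `C > 0` such that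
`T₁ := E[(f_n(x̃) − f_∞(x̃))²] + E[(f_n(x_NN) − f_∞(x_NN))²] ≤ C d² L² n^{−2/3}`,
where `f_∞(x) = ⟨x, L θ⋆⟩`. -/
theorem resmem_T1_bound :
    ∃ C : ℝ, 0 < C ∧
      ∀ (d n : ℕ), 1 ≤ d → 1 ≤ n →
      ∀ (θstar : EuclideanSpace ℝ (Fin d)) (L : ℝ),
        ‖θstar‖ = 1 → 0 < L → L < 1 →
      ∀ (θn : (Fin n → EuclideanSpace ℝ (Fin d)) → EuclideanSpace ℝ (Fin d))
        (xNN : (Fin n → EuclideanSpace ℝ (Fin d)) × EuclideanSpace ℝ (Fin d) →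
          EuclideanSpace ℝ (Fin d)),
        Measurable θn → Measurable xNN →
        IsERM d n L θstar θn → IsNN d n xNN →
        (∫⁻ ω, ENNReal.ofReal ((⟪ω.2, θn ω.1⟫ - ⟪ω.2, L • θstar⟫) ^ 2) ∂(jointMeasure d n))
          + (∫⁻ ω, ENNReal.ofReal ((⟪xNN ω, θn ω.1⟫ - ⟪xNN ω, L • θstar⟫) ^ 2)
              ∂(jointMeasure d n))
        ≤ ENNReal.ofReal
            (C * (d : ℝ) ^ 2 * L ^ 2 * (n : ℝ) ^ (-(2 : ℝ) / 3)) := by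
  refine ⟨192, by norm_num, ?_⟩
  intro d n hd hn θstar L hθ hL0 hL1 θn xNN hθn hxNN hERM hNN
  haveI : NeZero d := ⟨by omega⟩
  have hnpos : (0:ℝ) < n := by exact_mod_cast hn
  have hne : (n:ℝ) ≠ 0 := ne_of_gt hnpos
  set G : (Fin n → EuclideanSpace ℝ (Fin d)) → ℝ :=
    fun xs => ((d:ℝ)+2) * (4 * L^2 * ‖(n:ℝ)⁻¹ • (∑ i, ⟪xs i, θstar⟫ • xs i) - θstar‖^2)
    with hG
  have hGnn : ∀ xs, 0 ≤ G xs := by intro xs; rw [hG]; positivity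
  have hkey : ∀ xs, ∀ x ∈ Bd d, (⟪x, θn xs⟫ - ⟪x, L • θstar⟫)^2 ≤ G xs := by
    intro xs x hx
    have hLs : ‖L • θstar‖ ≤ L := by
      rw [norm_smul, hθ, mul_one, Real.norm_eq_abs, abs_of_pos hL0]
    have herm := erm_bound d n hn hθ hL0 hL1 xs (θn xs) (hERM xs).1
      ((hERM xs).2 (L • θstar) hLs)
    have hx2 := sq_norm_le_of_mem_Bd d hx
    have hinner : ⟪x, θn xs⟫ - ⟪x, L • θstar⟫ = ⟪x, θn xs - L • θstar⟫ :=
      (inner_sub_right x (θn xs) (L • θstar)).symm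
    rw [hinner]
    have hcs : ⟪x, θn xs - L • θstar⟫^2 ≤ ‖x‖^2 * ‖θn xs - L • θstar‖^2 := by
      calc ⟪x, θn xs - L • θstar⟫^2 = |⟪x, θn xs - L • θstar⟫|^2 := (sq_abs _).symm
      _ ≤ (‖x‖*‖θn xs - L • θstar‖)^2 :=
          pow_le_pow_left₀ (abs_nonneg _) (abs_real_inner_le_norm _ _) 2
      _ = ‖x‖^2 * ‖θn xs - L • θstar‖^2 := mul_pow _ _ 2
    calc ⟪x, θn xs - L • θstar⟫^2 ≤ ‖x‖^2 * ‖θn xs - L • θstar‖^2 := hcs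
    _ ≤ ((d:ℝ)+2) * (4 * L^2 * ‖(n:ℝ)⁻¹ • (∑ i, ⟪xs i, θstar⟫ • xs i) - θstar‖^2) :=
        mul_le_mul hx2 herm (sq_nonneg _) (by positivity)
    _ = G xs := rfl
  have haeBd : ∀ᵐ ω ∂(jointMeasure d n), (∀ i, ω.1 i ∈ Bd d) ∧ ω.2 ∈ Bd d := by
    have h1 : (jointMeasure d n) {ω : (Fin n → EuclideanSpace ℝ (Fin d)) ×
        EuclideanSpace ℝ (Fin d) | ¬ ∀ i, ω.1 i ∈ Bd d} = 0 := by
      have hset : {ω : (Fin n → EuclideanSpace ℝ (Fin d)) × EuclideanSpace ℝ (Fin d)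
          | ¬ ∀ i, ω.1 i ∈ Bd d}
          = {xs : Fin n → EuclideanSpace ℝ (Fin d) | ¬ ∀ i, xs i ∈ Bd d} ×ˢ Set.univ := by
        ext ω; simp [Set.mem_prod]
      rw [jointMeasure, hset, Measure.prod_prod,
        show (Measure.pi fun _ : Fin n => uniformBall d)
          {xs : Fin n → EuclideanSpace ℝ (Fin d) | ¬ ∀ i, xs i ∈ Bd d} = 0 from
          ae_iff.1 (ae_pi_mem_Bd d n), zero_mul]
    have h2 : (jointMeasure d n) {ω : (Fin n → EuclideanSpace ℝ (Fin d)) ×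
        EuclideanSpace ℝ (Fin d) | ¬ ω.2 ∈ Bd d} = 0 := by
      have hset : {ω : (Fin n → EuclideanSpace ℝ (Fin d)) × EuclideanSpace ℝ (Fin d)
          | ¬ ω.2 ∈ Bd d}
          = (Set.univ : Set (Fin n → EuclideanSpace ℝ (Fin d))) ×ˢ ((Bd d)ᶜ) := by
        ext ω; simp [Set.mem_prod]
      rw [jointMeasure, hset, Measure.prod_prod, uniformBall_compl_Bd d, mul_zero]
    exact (ae_iff.2 h1).and (ae_iff.2 h2)
  have hb1 : (∫⁻ ω, ENNReal.ofReal ((⟪ω.2, θn ω.1⟫ - ⟪ω.2, L • θstar⟫) ^ 2)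
      ∂(jointMeasure d n)) ≤ ∫⁻ ω, ENNReal.ofReal (G ω.1) ∂(jointMeasure d n) := by
    apply lintegral_mono_ae
    filter_upwards [haeBd] with ω hω
    exact ENNReal.ofReal_le_ofReal (hkey ω.1 ω.2 hω.2)
  have hb2 : (∫⁻ ω, ENNReal.ofReal ((⟪xNN ω, θn ω.1⟫ - ⟪xNN ω, L • θstar⟫) ^ 2)
      ∂(jointMeasure d n)) ≤ ∫⁻ ω, ENNReal.ofReal (G ω.1) ∂(jointMeasure d n) := by
    apply lintegral_mono_ae
    filter_upwards [haeBd] with ω hω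
    obtain ⟨j, hj, _⟩ := hNN ω
    refine ENNReal.ofReal_le_ofReal (hkey ω.1 (xNN ω) ?_)
    rw [hj]
    exact hω.1 j
  have hGcont : Continuous G := by
    apply Continuous.mul continuous_const
    apply Continuous.mul continuous_const
    apply Continuous.pow
    apply Continuous.norm
    apply Continuous.sub _ continuous_const
    apply (continuous_const_smul ((n:ℝ)⁻¹)).comp
    apply continuous_finset_sum
    intro i _
    exact (((continuous_apply i).inner continuous_const :
      Continuous fun xs : Fin n → EuclideanSpace ℝ (Fin d) => ⟪xs i, θstar⟫)).smul
      (continuous_apply i)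
  have hGmeas : Measurable G := hGcont.measurable
  have hJ1 : (∫⁻ ω, ENNReal.ofReal (G ω.1) ∂(jointMeasure d n))
      = ∫⁻ xs, ENNReal.ofReal (G xs) ∂(Measure.pi (fun _ : Fin n => uniformBall d)) := by
    rw [jointMeasure, MeasureTheory.lintegral_prod (fun ω => ENNReal.ofReal (G ω.1))
      (by exact (ENNReal.measurable_ofReal.comp (hGmeas.comp measurable_fst)).aemeasurable)]
    have hc : ∀ xs : Fin n → EuclideanSpace ℝ (Fin d),
        ∫⁻ _y, ENNReal.ofReal (G xs) ∂(uniformBall d) = ENNReal.ofReal (G xs) := by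
      intro xs
      rw [lintegral_const, measure_univ, mul_one]
    simp_rw [hc]
  have hGint : Integrable G (Measure.pi (fun _ : Fin n => uniformBall d)) := by
    refine Integrable.mono' (integrable_const (((d:ℝ)+2) * (4*L^2*((d:ℝ)+3)^2)))
      hGmeas.aestronglyMeasurable ?_
    filter_upwards [ae_pi_mem_Bd d n] with xs hxs
    rw [Real.norm_eq_abs, abs_of_nonneg (hGnn xs)]
    have hbnorm : ‖(n:ℝ)⁻¹ • (∑ i, ⟪xs i, θstar⟫ • xs i) - θstar‖ ≤ (d:ℝ)+3 := by
      have hterm : ∀ i : Fin n, ‖⟪xs i, θstar⟫ • xs i‖ ≤ (d:ℝ)+2 := by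
        intro i
        have h1 := sq_norm_le_of_mem_Bd d (hxs i)
        have h2 : |⟪xs i, θstar⟫| ≤ ‖xs i‖ * ‖θstar‖ := abs_real_inner_le_norm _ _
        rw [norm_smul, Real.norm_eq_abs]
        rw [hθ, mul_one] at h2
        nlinarith [norm_nonneg (xs i), abs_nonneg ⟪xs i, θstar⟫]
      have h1 : ‖∑ i, ⟪xs i, θstar⟫ • xs i‖ ≤ (n:ℝ) * ((d:ℝ)+2) := by
        calc ‖∑ i, ⟪xs i, θstar⟫ • xs i‖ ≤ ∑ i, ‖⟪xs i, θstar⟫ • xs i‖ :=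
            norm_sum_le _ _
        _ ≤ ∑ _i : Fin n, ((d:ℝ)+2) := Finset.sum_le_sum (fun i _ => hterm i)
        _ = (n:ℝ) * ((d:ℝ)+2) := by
            rw [Finset.sum_const, Finset.card_univ, Fintype.card_fin, nsmul_eq_mul]
      calc ‖(n:ℝ)⁻¹ • (∑ i, ⟪xs i, θstar⟫ • xs i) - θstar‖
          ≤ ‖(n:ℝ)⁻¹ • (∑ i, ⟪xs i, θstar⟫ • xs i)‖ + ‖θstar‖ := norm_sub_le _ _
      _ = (n:ℝ)⁻¹ * ‖∑ i, ⟪xs i, θstar⟫ • xs i‖ + 1 := by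
          rw [norm_smul, Real.norm_eq_abs, abs_of_nonneg (by positivity), hθ]
      _ ≤ (n:ℝ)⁻¹ * ((n:ℝ) * ((d:ℝ)+2)) + 1 := by
          have := mul_le_mul_of_nonneg_left h1 (by positivity : (0:ℝ) ≤ (n:ℝ)⁻¹)
          linarith
      _ = (d:ℝ)+3 := by
          field_simp
          ring
    have hsq : ‖(n:ℝ)⁻¹ • (∑ i, ⟪xs i, θstar⟫ • xs i) - θstar‖^2 ≤ ((d:ℝ)+3)^2 :=
      pow_le_pow_left₀ (norm_nonneg _) hbnorm 2
    have hGeq : G xs = ((d:ℝ)+2) *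
        (4*L^2*‖(n:ℝ)⁻¹ • (∑ i, ⟪xs i, θstar⟫ • xs i) - θstar‖^2) := rfl
    rw [hGeq]
    apply mul_le_mul_of_nonneg_left _ (by positivity : (0:ℝ) ≤ (d:ℝ)+2)
    exact mul_le_mul_of_nonneg_left hsq (by positivity)
  have hJle : (∫⁻ ω, ENNReal.ofReal (G ω.1) ∂(jointMeasure d n))
      ≤ ENNReal.ofReal (((d:ℝ)+2) * (4*L^2*(8*(d:ℝ)/(n:ℝ)))) := by
    rw [hJ1, ← ofReal_integral_eq_lintegral_ofReal hGint
      (Filter.Eventually.of_forall hGnn)]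
    apply ENNReal.ofReal_le_ofReal
    have hvar := variance_bound d n hn hθ
    calc ∫ xs, G xs ∂(Measure.pi (fun _ : Fin n => uniformBall d))
        = ((d:ℝ)+2) * ∫ xs, 4*L^2*‖(n:ℝ)⁻¹ • (∑ i, ⟪xs i, θstar⟫ • xs i) - θstar‖^2
          ∂(Measure.pi (fun _ : Fin n => uniformBall d)) := integral_const_mul _ _
    _ = ((d:ℝ)+2) * (4*L^2 * ∫ xs, ‖(n:ℝ)⁻¹ • (∑ i, ⟪xs i, θstar⟫ • xs i) - θstar‖^2
          ∂(Measure.pi (fun _ : Fin n => uniformBall d))) := by rw [integral_const_mul]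
    _ ≤ ((d:ℝ)+2) * (4*L^2*(8*(d:ℝ)/(n:ℝ))) := by
        apply mul_le_mul_of_nonneg_left _ (by positivity : (0:ℝ) ≤ (d:ℝ)+2)
        exact mul_le_mul_of_nonneg_left hvar (by positivity)
  have hfin : (((d:ℝ)+2) * (4*L^2*(8*(d:ℝ)/(n:ℝ)))) + (((d:ℝ)+2) * (4*L^2*(8*(d:ℝ)/(n:ℝ))))
      ≤ 192 * (d:ℝ)^2 * L^2 * (n:ℝ)^(-(2:ℝ)/3) := by
    have hd1 : (1:ℝ) ≤ d := by exact_mod_cast hd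
    have hn1 : (1:ℝ) ≤ n := by exact_mod_cast hn
    have hrpow : (n:ℝ)⁻¹ ≤ (n:ℝ)^(-(2:ℝ)/3) := by
      rw [← Real.rpow_neg_one]
      exact Real.rpow_le_rpow_of_exponent_le hn1 (by norm_num)
    calc (((d:ℝ)+2) * (4*L^2*(8*(d:ℝ)/(n:ℝ)))) + (((d:ℝ)+2) * (4*L^2*(8*(d:ℝ)/(n:ℝ))))
        = 64*L^2*((d:ℝ)*((d:ℝ)+2)) * (n:ℝ)⁻¹ := by field_simp; ring
    _ ≤ 64*L^2*(3*(d:ℝ)^2) * (n:ℝ)⁻¹ := by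
        apply mul_le_mul_of_nonneg_right _ (by positivity : (0:ℝ) ≤ (n:ℝ)⁻¹)
        apply mul_le_mul_of_nonneg_left _ (by positivity : (0:ℝ) ≤ 64*L^2)
        nlinarith
    _ = 192*(d:ℝ)^2*L^2 * (n:ℝ)⁻¹ := by ring
    _ ≤ 192*(d:ℝ)^2*L^2 * (n:ℝ)^(-(2:ℝ)/3) := by
        apply mul_le_mul_of_nonneg_left hrpow (by positivity)
  calc (∫⁻ ω, ENNReal.ofReal ((⟪ω.2, θn ω.1⟫ - ⟪ω.2, L • θstar⟫) ^ 2) ∂(jointMeasure d n))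
        + (∫⁻ ω, ENNReal.ofReal ((⟪xNN ω, θn ω.1⟫ - ⟪xNN ω, L • θstar⟫) ^ 2)
            ∂(jointMeasure d n))
      ≤ (∫⁻ ω, ENNReal.ofReal (G ω.1) ∂(jointMeasure d n))
        + (∫⁻ ω, ENNReal.ofReal (G ω.1) ∂(jointMeasure d n)) := add_le_add hb1 hb2
  _ ≤ ENNReal.ofReal (((d:ℝ)+2) * (4*L^2*(8*(d:ℝ)/(n:ℝ))))
      + ENNReal.ofReal (((d:ℝ)+2) * (4*L^2*(8*(d:ℝ)/(n:ℝ)))) := add_le_add hJle hJle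
  _ = ENNReal.ofReal ((((d:ℝ)+2) * (4*L^2*(8*(d:ℝ)/(n:ℝ))))
      + (((d:ℝ)+2) * (4*L^2*(8*(d:ℝ)/(n:ℝ))))) :=
      (ENNReal.ofReal_add (by positivity) (by positivity)).symm
  _ ≤ ENNReal.ofReal (192 * (d:ℝ)^2 * L^2 * (n:ℝ)^(-(2:ℝ)/3)) :=
      ENNReal.ofReal_le_ofReal hfin
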